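/- Let G be a group with subgroups A, B ≤ G such that B normalizes A, A ∩ B = {e}, and G = AB (inner semidirect product G = [AB]). Then for every atomic subset S ⊆ G, the subgroup ⟨S⟩ ∩ A equals ⟨(S ∩ A)^{⟨S ∩ B⟩}⟩, the subgroup generated by the set of conjugates { b a b⁻¹ : a ∈ S ∩ A, b ∈ ⟨S ∩ B⟩ }. In other words, ⟨S⟩ ∩ A is the conjugate closure of S ∩ A under ⟨S ∩ B⟩. -/

import Mathlib

/-- Let `G = [AB]` be an inner semidirect product of subgroups `A, B ≤ G`.
Then for every atomic subset `S ⊆ G` (i.e. `S ⊆ A ∪ B`), the subgroup `⟨S⟩ ∩ A` equals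
`⟨(S ∩ A)^{⟨S ∩ B⟩}⟩`, the subgroup generated by the conjugates
`{ b a b⁻¹ : a ∈ S ∩ A, b ∈ ⟨S ∩ B⟩ }`. -/
theorem stmt_1 {G : Type*} [Group G] (A B : Subgroup G)
    (hnorm : B ≤ Subgroup.normalizer (A : Set G))
    (hint : A ⊓ B = ⊥)
    (hprod : ∀ g : G, ∃ a ∈ A, ∃ b ∈ B, g = a * b)
    (S : Set G) (hS : S ⊆ (A : Set G) ∪ (B : Set G)) :
    Subgroup.closure S ⊓ A =
      Subgroup.closure
        {x | ∃ a ∈ S ∩ (A : Set G), ∃ b ∈ Subgroup.closure (S ∩ (B : Set G)),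
          x = b * a * b⁻¹} := by
  set H := Subgroup.closure (S ∩ (B : Set G)) with hH
  set T : Set G := {x | ∃ a ∈ S ∩ (A : Set G), ∃ b ∈ H, x = b * a * b⁻¹} with hT
  set C := Subgroup.closure T with hC
  have hHB : H ≤ B := (Subgroup.closure_le B).2 Set.inter_subset_right
  have hTA : T ⊆ (A : Set G) := by
    rintro x ⟨a, ⟨haS, haA⟩, b, hbH, rfl⟩
    exact ((Subgroup.mem_normalizer_iff.1 (hnorm (hHB hbH))) a).1 haA
  have hCA : C ≤ A := (Subgroup.closure_le A).2 hTA
  have hconj : ∀ h ∈ H, ∀ c ∈ C, h * c * h⁻¹ ∈ C := by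
    intro h hh c hc
    have hle : C ≤ Subgroup.comap ((MulAut.conj h).toMonoidHom) C := by
      rw [hC, Subgroup.closure_le]
      rintro x ⟨a, haS, b, hbH, rfl⟩
      simp only [Set.mem_preimage, SetLike.mem_coe, Subgroup.mem_comap,
        MulEquiv.coe_toMonoidHom, MulAut.conj_apply]
      apply Subgroup.subset_closure
      refine ⟨a, haS, h * b, mul_mem hh hbH, by group⟩
    simpa using hle hc
  have hdecomp : ∀ g ∈ Subgroup.closure S, ∃ c ∈ C, ∃ h ∈ H, g = c * h := by
    intro g hg
    induction hg using Subgroup.closure_induction with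
    | mem s hs =>
      rcases hS hs with hsA | hsB
      · exact ⟨s, Subgroup.subset_closure ⟨s, ⟨hs, hsA⟩, 1, one_mem _, by group⟩,
          1, one_mem _, (mul_one s).symm⟩
      · exact ⟨1, one_mem _, s, Subgroup.subset_closure ⟨hs, hsB⟩, (one_mul s).symm⟩
    | one => exact ⟨1, one_mem _, 1, one_mem _, (one_mul 1).symm⟩
    | mul x y hx hy ihx ihy =>
      obtain ⟨c1, hc1, h1, hh1, rfl⟩ := ihx
      obtain ⟨c2, hc2, h2, hh2, rfl⟩ := ihy
      exact ⟨c1 * (h1 * c2 * h1⁻¹), mul_mem hc1 (hconj h1 hh1 c2 hc2),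
        h1 * h2, mul_mem hh1 hh2, by group⟩
    | inv x hx ihx =>
      obtain ⟨c, hc, h, hh, rfl⟩ := ihx
      exact ⟨h⁻¹ * c⁻¹ * h⁻¹⁻¹, hconj h⁻¹ (inv_mem hh) c⁻¹ (inv_mem hc),
        h⁻¹, inv_mem hh, by group⟩
  apply le_antisymm
  · rintro x ⟨hxS, hxA⟩
    obtain ⟨c, hc, h, hh, rfl⟩ := hdecomp x hxS
    have hhA : h ∈ A := by
      have : c⁻¹ * (c * h) ∈ A := mul_mem (inv_mem (hCA hc)) hxA
      simpa using this
    have : h ∈ A ⊓ B := ⟨hhA, hHB hh⟩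
    rw [hint, Subgroup.mem_bot] at this
    rw [this, mul_one]
    exact hc
  · refine le_inf ((Subgroup.closure_le _).2 ?_) hCA
    rintro x ⟨a, ⟨haS, haA⟩, b, hbH, rfl⟩
    have hb : b ∈ Subgroup.closure S :=
      Subgroup.closure_mono Set.inter_subset_left hbH
    exact mul_mem (mul_mem hb (Subgroup.subset_closure haS)) (inv_mem hb)
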